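/- Let r₁ > 3/2. There exists a constant C > 0 (depending only on r₁) such that for all t ≥ 0 and all x ∈ ℝ³, ∫_{ℝ³} (1 + |x−y|²/(1+t))^{−1} (1 + |y|²)^{−r₁} dy ≤ C (1 + |x|²/(1+t))^{−1}. -/

import Mathlib

open MeasureTheory Metric Set

namespace StmtAux

noncomputable abbrev E3 := EuclideanSpace ℝ (Fin 3)

noncomputable def kap : ℝ := (volume (ball (0 : E3) 1)).toReal

lemma kap_nonneg : 0 ≤ kap := ENNReal.toReal_nonneg

lemma inv_one_add_le_one {A : ℝ} (h : 0 ≤ A) : (1 + A)⁻¹ ≤ 1 := by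
  have := inv_anti₀ one_pos (le_add_of_nonneg_right h)
  simpa using this

lemma volume_ball_toReal (R : ℝ) (hR : 0 ≤ R) :
    (volume (ball (0 : E3) R)).toReal = R ^ 3 * kap := by
  rw [Measure.addHaar_ball volume (0 : E3) hR]
  rw [show Module.finrank ℝ E3 = 3 from finrank_euclideanSpace_fin]
  rw [ENNReal.toReal_mul, ENNReal.toReal_ofReal (by positivity)]
  rfl

lemma cont_inv (s : ℝ) (hs : 0 < s) (x : E3) :
    Continuous fun y : E3 => (1 + ‖x - y‖ ^ 2 / s)⁻¹ := by
  apply Continuous.inv₀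
  · fun_prop
  · intro y
    have : 0 ≤ ‖x - y‖ ^ 2 / s := div_nonneg (by positivity) hs.le
    nlinarith

/-- Volume bound for the ball integral. -/
lemma ball_int_le_vol (s R : ℝ) (hs : 0 < s) (hR : 0 ≤ R) :
    ∫ z : E3 in ball 0 R, (1 + ‖z‖ ^ 2 / s)⁻¹ ≤ kap * R ^ 3 := by
  have h := norm_setIntegral_le_of_norm_le_const (μ := volume) (s := ball (0 : E3) R)
    (f := fun z => (1 + ‖z‖ ^ 2 / s)⁻¹) (C := 1) measure_ball_lt_top ?_
  · calc ∫ z : E3 in ball 0 R, (1 + ‖z‖ ^ 2 / s)⁻¹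
        ≤ ‖∫ z : E3 in ball 0 R, (1 + ‖z‖ ^ 2 / s)⁻¹‖ := le_abs_self _
      _ ≤ 1 * (volume (ball (0 : E3) R)).toReal := h
      _ = kap * R ^ 3 := by rw [one_mul, volume_ball_toReal R hR]; ring
  · intro z _
    have h0 : 0 ≤ ‖z‖ ^ 2 / s := div_nonneg (by positivity) hs.le
    rw [Real.norm_eq_abs, abs_of_nonneg (by positivity)]
    exact inv_one_add_le_one h0

/-- Polar-coordinates bound for the ball integral. -/
lemma ball_int_le_polar (s R : ℝ) (hs : 0 < s) (hR : 0 ≤ R) :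
    ∫ z : E3 in ball 0 R, (1 + ‖z‖ ^ 2 / s)⁻¹ ≤ 3 * kap * (s * R) := by
  set f : ℝ → ℝ := fun r => if r < R then (1 + r ^ 2 / s)⁻¹ else 0 with hfdef
  have hind : ∀ z : E3,
      (ball (0 : E3) R).indicator (fun z => (1 + ‖z‖ ^ 2 / s)⁻¹) z = f ‖z‖ := by
    intro z
    by_cases h : ‖z‖ < R
    · rw [indicator_of_mem (mem_ball_zero_iff.2 h)]; simp [hfdef, h]
    · rw [indicator_of_notMem (fun hm => h (mem_ball_zero_iff.1 hm))]; simp [hfdef, h]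
  have hfnn : ∀ r : ℝ, 0 ≤ f r := by
    intro r
    simp only [hfdef]
    split
    · have h0 : 0 ≤ r ^ 2 / s := div_nonneg (by positivity) hs.le
      positivity
    · exact le_refl 0
  have key : ∀ y ∈ Ioi (0:ℝ), y ^ 2 * f y ≤ (Ioc (0:ℝ) R).indicator (fun _ => s) y := by
    intro y hy
    by_cases h : y < R
    · rw [indicator_of_mem (mem_Ioc.2 ⟨hy, h.le⟩)]
      simp only [hfdef, if_pos h]
      have h0 : 0 ≤ y ^ 2 / s := div_nonneg (by positivity) hs.le
      have h1 : (0:ℝ) < 1 + y ^ 2 / s := by linarith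
      have h2 : y ^ 2 ≤ s * (1 + y ^ 2 / s) := by
        have hexp : s * (1 + y ^ 2 / s) = s + y ^ 2 := by field_simp
        rw [hexp]; linarith [hs.le]
      calc y ^ 2 * (1 + y ^ 2 / s)⁻¹ ≤ (s * (1 + y ^ 2 / s)) * (1 + y ^ 2 / s)⁻¹ := by
            apply mul_le_mul_of_nonneg_right h2 (by positivity)
        _ = s := by field_simp
    · simp only [hfdef, if_neg h, mul_zero]
      exact indicator_nonneg (fun _ _ => hs.le) y
  have hf_meas : Measurable f := by
    apply Measurable.ite measurableSet_Iio
    · apply Measurable.inv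
      fun_prop
    · exact measurable_const
  have hbound : IntegrableOn ((Ioc (0:ℝ) R).indicator (fun _ => s)) (Ioi (0:ℝ)) volume := by
    rw [IntegrableOn, integrable_indicator_iff measurableSet_Ioc]
    refine integrableOn_const (ne_of_lt ?_)
    calc (volume.restrict (Ioi (0:ℝ))) (Ioc 0 R) ≤ volume (Ioc (0:ℝ) R) :=
          Measure.restrict_apply_le _ _
      _ < ⊤ := measure_Ioc_lt_top
  have hint : IntegrableOn (fun y : ℝ => y ^ 2 * f y) (Ioi (0:ℝ)) volume := by
    apply Integrable.mono' hbound
    · exact (((measurable_id.pow_const 2).mul hf_meas).aestronglyMeasurable).restrict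
    · rw [ae_restrict_iff' measurableSet_Ioi]
      apply ae_of_all
      intro y hy
      rw [Real.norm_eq_abs, abs_of_nonneg (mul_nonneg (by positivity) (hfnn y))]
      exact key y hy
  have hIoi : ∫ y in Ioi (0:ℝ), y ^ 2 * f y ≤ s * R := by
    calc ∫ y in Ioi (0:ℝ), y ^ 2 * f y
        ≤ ∫ y in Ioi (0:ℝ), (Ioc (0:ℝ) R).indicator (fun _ => s) y :=
          setIntegral_mono_on hint hbound measurableSet_Ioi key
      _ = ∫ _y in Ioi (0:ℝ) ∩ Ioc (0:ℝ) R, s := setIntegral_indicator measurableSet_Ioc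
      _ = s * R := by
          rw [Set.inter_eq_self_of_subset_right Ioc_subset_Ioi_self, setIntegral_const,
            Real.volume_real_Ioc_of_le hR, smul_eq_mul]
          ring
  calc ∫ z : E3 in ball 0 R, (1 + ‖z‖ ^ 2 / s)⁻¹
      = ∫ z : E3, (ball (0 : E3) R).indicator (fun z => (1 + ‖z‖ ^ 2 / s)⁻¹) z :=
        (integral_indicator measurableSet_ball).symm
    _ = ∫ z : E3, f ‖z‖ := by simp_rw [hind]
    _ = Module.finrank ℝ E3 • (volume (ball (0 : E3) 1)).toReal •
          ∫ y in Ioi (0:ℝ), y ^ (Module.finrank ℝ E3 - 1) • f y :=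
        integral_fun_norm_addHaar volume f
    _ = 3 * (kap * ∫ y in Ioi (0:ℝ), y ^ 2 * f y) := by
        rw [show Module.finrank ℝ E3 = 3 from finrank_euclideanSpace_fin]
        simp only [nsmul_eq_mul, smul_eq_mul, Nat.cast_ofNat, kap]
    _ ≤ 3 * (kap * (s * R)) := by
        apply mul_le_mul_of_nonneg_left (mul_le_mul_of_nonneg_left hIoi kap_nonneg) (by norm_num)
    _ = 3 * kap * (s * R) := by ring

set_option maxHeartbeats 1000000 in
lemma reflect (x : E3) (R : ℝ) (h : E3 → ℝ) :
    ∫ y in ball x R, h (x - y) = ∫ z in ball (0 : E3) R, h z := by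
  rw [← integral_indicator measurableSet_ball, ← integral_indicator measurableSet_ball]
  have heq : ∀ y : E3, (ball x R).indicator (fun y => h (x - y)) y
      = (ball (0 : E3) R).indicator h (x - y) := by
    intro y
    have hmem : y ∈ ball x R ↔ x - y ∈ ball (0 : E3) R := by
      rw [mem_ball, mem_ball_zero_iff, dist_eq_norm, norm_sub_rev]
    by_cases hy : y ∈ ball x R
    · rw [indicator_of_mem hy, indicator_of_mem (hmem.1 hy)]
    · rw [indicator_of_notMem hy, indicator_of_notMem (fun hc => hy (hmem.2 hc))]
  simp_rw [heq]
  exact integral_sub_left_eq_self ((ball (0 : E3) R).indicator h) volume x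

end StmtAux

open StmtAux

set_option maxHeartbeats 1000000 in
/-- Estimate ℐ₁ of Lemma A.3: convolution of the Riesz wave profile with a
spatially decaying initial datum. -/
theorem stmt_0 (r₁ : ℝ) (hr₁ : r₁ > 3 / 2) :
    ∃ C : ℝ, 0 < C ∧ ∀ t : ℝ, 0 ≤ t → ∀ x : EuclideanSpace ℝ (Fin 3),
      (∫ y : EuclideanSpace ℝ (Fin 3),
          (1 + ‖x - y‖ ^ 2 / (1 + t)) ^ (-1 : ℝ) * (1 + ‖y‖ ^ 2) ^ (-r₁))
        ≤ C * (1 + ‖x‖ ^ 2 / (1 + t)) ^ (-1 : ℝ) := by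
  have hg : Integrable (fun y : E3 => (1 + ‖y‖ ^ 2) ^ (-r₁)) volume := by
    have h3 : (Module.finrank ℝ E3 : ℝ) < 2 * r₁ := by
      rw [show Module.finrank ℝ E3 = 3 from finrank_euclideanSpace_fin]
      push_cast; linarith
    have := integrable_rpow_neg_one_add_norm_sq (E := E3) (μ := volume) h3
    simpa [show -(2*r₁)/2 = -r₁ by ring] using this
  set g : E3 → ℝ := fun y => (1 + ‖y‖ ^ 2) ^ (-r₁) with hgdef
  have hgnn : ∀ y : E3, 0 ≤ g y := fun y => Real.rpow_nonneg (by positivity) _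
  set K : ℝ := ∫ y : E3, g y with hKdef
  have hK0 : 0 ≤ K := integral_nonneg hgnn
  set p : ℝ := (4:ℝ) ^ r₁ with hpdef
  have hp0 : (0:ℝ) < p := Real.rpow_pos_of_pos (by norm_num) _
  refine ⟨4*K + 3*kap*p + 1, by nlinarith [kap_nonneg], ?_⟩
  intro t ht x
  set s : ℝ := 1 + t with hsdef
  have hs0 : (0:ℝ) < s := by simp only [hsdef]; linarith
  simp only [Real.rpow_neg_one]
  set R : ℝ := ‖x‖ / 2 with hRdef
  have hR0 : 0 ≤ R := by positivity
  set M : ℝ := 1 + ‖x‖ ^ 2 / s with hMdef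
  have hM1 : 1 ≤ M := le_add_of_nonneg_right (div_nonneg (by positivity) hs0.le)
  have hM0 : 0 < M := lt_of_lt_of_le one_pos hM1
  set f : E3 → ℝ := fun y => (1 + ‖x - y‖ ^ 2 / s)⁻¹ * g y with hfdef
  have hApos : ∀ y : E3, 0 < 1 + ‖x - y‖ ^ 2 / s := by
    intro y
    have : 0 ≤ ‖x - y‖ ^ 2 / s := div_nonneg (by positivity) hs0.le
    linarith
  have hcont := StmtAux.cont_inv s hs0 x
  have hf_int : Integrable f volume := by
    apply hg.bdd_mul (c := 1) hcont.aestronglyMeasurable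
    refine ae_of_all _ (fun y => ?_)
    rw [Real.norm_eq_abs, abs_of_nonneg (inv_nonneg.2 (hApos y).le)]
    exact inv_one_add_le_one (div_nonneg (by positivity) hs0.le)
  have hsplit : ∫ y, f y = (∫ y in ball x R, f y) + ∫ y in (ball x R)ᶜ, f y :=
    (integral_add_compl measurableSet_ball hf_int).symm
  -- Region I : outside the ball
  have hregionI : ∫ y in (ball x R)ᶜ, f y ≤ 4 * M⁻¹ * K := by
    have hpt : ∀ y ∈ (ball x R)ᶜ, f y ≤ (4 * M⁻¹) * g y := by
      intro y hy
      have hdy : R ≤ dist y x := by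
        simp only [mem_compl_iff, mem_ball, not_lt] at hy
        exact hy
      have hxy : R ≤ ‖x - y‖ := by rwa [dist_eq_norm, norm_sub_rev] at hdy
      have h5 : ‖x‖ ^ 2 ≤ 4 * ‖x - y‖ ^ 2 := by
        have : ‖x‖ / 2 ≤ ‖x - y‖ := hxy
        nlinarith [norm_nonneg x]
      have h6 : ‖x‖ ^ 2 / s ≤ 4 * (‖x - y‖ ^ 2 / s) := by
        rw [← mul_div_assoc]
        exact (div_le_div_iff_of_pos_right hs0).2 h5
      have h4 : M ≤ 4 * (1 + ‖x - y‖ ^ 2 / s) := by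
        simp only [hMdef]; linarith
      have hinv : (1 + ‖x - y‖ ^ 2 / s)⁻¹ ≤ 4 * M⁻¹ := by
        have h7 : M / 4 ≤ 1 + ‖x - y‖ ^ 2 / s := by linarith
        have h8 : (1 + ‖x - y‖ ^ 2 / s)⁻¹ ≤ (M / 4)⁻¹ :=
          inv_anti₀ (div_pos hM0 (by norm_num)) h7
        calc (1 + ‖x - y‖ ^ 2 / s)⁻¹ ≤ (M / 4)⁻¹ := h8
          _ = 4 * M⁻¹ := by rw [inv_div]; ring
      exact mul_le_mul_of_nonneg_right hinv (hgnn y)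
    calc ∫ y in (ball x R)ᶜ, f y
        ≤ ∫ y in (ball x R)ᶜ, (4 * M⁻¹) * g y :=
          setIntegral_mono_on hf_int.integrableOn
            ((hg.const_mul _).integrableOn) measurableSet_ball.compl hpt
      _ = (4 * M⁻¹) * ∫ y in (ball x R)ᶜ, g y := integral_const_mul _ _
      _ ≤ (4 * M⁻¹) * K := by
          apply mul_le_mul_of_nonneg_left
            (setIntegral_le_integral hg (ae_of_all _ hgnn))
          positivity
      _ = 4 * M⁻¹ * K := by ring
  -- key cube estimate
  have hx3 : (1 + ‖x‖ ^ 2) ^ (-r₁) * ‖x‖ ^ 3 ≤ 1 := by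
    have hb : (0:ℝ) < 1 + ‖x‖ ^ 2 := by positivity
    have h1 : ‖x‖ ^ 3 ≤ (1 + ‖x‖ ^ 2) ^ r₁ := by
      have h2 : ((‖x‖ ^ 2 : ℝ)) ^ ((3:ℝ)/2) = ‖x‖ ^ 3 := by
        rw [← Real.rpow_natCast ‖x‖ 2, ← Real.rpow_mul (norm_nonneg x),
          ← Real.rpow_natCast ‖x‖ 3]
        norm_num
      calc ‖x‖ ^ 3 = ((‖x‖ ^ 2 : ℝ)) ^ ((3:ℝ)/2) := h2.symm
        _ ≤ (1 + ‖x‖ ^ 2) ^ ((3:ℝ)/2) :=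
            Real.rpow_le_rpow (by positivity) (by linarith) (by norm_num)
        _ ≤ (1 + ‖x‖ ^ 2) ^ r₁ :=
            Real.rpow_le_rpow_of_exponent_le (by nlinarith [sq_nonneg ‖x‖]) (by linarith)
    rw [Real.rpow_neg hb.le]
    calc ((1 + ‖x‖ ^ 2) ^ r₁)⁻¹ * ‖x‖ ^ 3
        ≤ ((1 + ‖x‖ ^ 2) ^ r₁)⁻¹ * (1 + ‖x‖ ^ 2) ^ r₁ :=
          mul_le_mul_of_nonneg_left h1 (inv_nonneg.2 (Real.rpow_nonneg hb.le _))
      _ = 1 := inv_mul_cancel₀ (ne_of_gt (Real.rpow_pos_of_pos hb _))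
  -- Region II : the ball
  have hregionII : ∫ y in ball x R, f y ≤ (3 * kap * p) * M⁻¹ := by
    set a : ℝ := (1 + ‖x‖ ^ 2) ^ (-r₁) with hadef
    have ha0 : 0 ≤ a := Real.rpow_nonneg (by positivity) _
    have hptII : ∀ y ∈ ball x R, f y ≤ (p * a) * (1 + ‖x - y‖ ^ 2 / s)⁻¹ := by
      intro y hy
      have hy' : ‖x - y‖ < R := by
        rw [mem_ball, dist_eq_norm] at hy
        rwa [norm_sub_rev] at hy
      have hny : ‖x‖ / 2 ≤ ‖y‖ := by
        have h9 := norm_sub_norm_le x y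
        rw [hRdef] at hy'
        have h10 : ‖x‖ - ‖y‖ ≤ ‖x - y‖ := h9
        linarith
      have hquarter : (1 + ‖x‖ ^ 2) / 4 ≤ 1 + ‖y‖ ^ 2 := by
        nlinarith [norm_nonneg x, norm_nonneg y]
      have hle : g y ≤ ((1 + ‖x‖ ^ 2) / 4) ^ (-r₁) :=
        Real.rpow_le_rpow_of_nonpos (by positivity) hquarter (by linarith)
      have heq : ((1 + ‖x‖ ^ 2) / 4) ^ (-r₁) = p * a := by
        rw [Real.div_rpow (by positivity) (by norm_num : (0:ℝ) ≤ 4),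
          Real.rpow_neg (by norm_num : (0:ℝ) ≤ 4), div_eq_mul_inv, inv_inv]
        ring
      calc f y ≤ (1 + ‖x - y‖ ^ 2 / s)⁻¹ * (p * a) :=
            mul_le_mul_of_nonneg_left (hle.trans_eq heq) (inv_nonneg.2 (hApos y).le)
        _ = (p * a) * (1 + ‖x - y‖ ^ 2 / s)⁻¹ := mul_comm _ _
    have hJint : IntegrableOn (fun y : E3 => (1 + ‖x - y‖ ^ 2 / s)⁻¹) (ball x R) volume := by
      apply Measure.integrableOn_of_bounded (M := 1) measure_ball_lt_top.ne
        hcont.aestronglyMeasurable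
      apply ae_of_all
      intro y
      rw [Real.norm_eq_abs, abs_of_nonneg (inv_nonneg.2 (hApos y).le)]
      exact inv_one_add_le_one (div_nonneg (by positivity) hs0.le)
    set J : ℝ := ∫ z : E3 in ball 0 R, (1 + ‖z‖ ^ 2 / s)⁻¹ with hJdef
    have hJ0 : 0 ≤ J := setIntegral_nonneg measurableSet_ball
      (fun z _ => inv_nonneg.2 (by
        have : 0 ≤ ‖z‖ ^ 2 / s := div_nonneg (by positivity) hs0.le
        linarith))
    have hJ1 : J ≤ kap * R ^ 3 := ball_int_le_vol s R hs0 hR0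
    have hJ2 : J ≤ 3 * kap * (s * R) := ball_int_le_polar s R hs0 hR0
    have hpa0 : 0 ≤ p * a := mul_nonneg hp0.le ha0
    have hkey : ((p * a) * J) * M ≤ 3 * kap * p := by
      rcases le_or_gt (‖x‖ ^ 2) s with hcase | hcase
      · have hM2 : M ≤ 2 := by
          have : ‖x‖ ^ 2 / s ≤ 1 := (div_le_one hs0).2 hcase
          simp only [hMdef]; linarith
        calc ((p * a) * J) * M ≤ ((p * a) * J) * 2 :=
              mul_le_mul_of_nonneg_left hM2 (mul_nonneg hpa0 hJ0)
          _ ≤ ((p * a) * (kap * R ^ 3)) * 2 := by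
              apply mul_le_mul_of_nonneg_right _ (by norm_num)
              exact mul_le_mul_of_nonneg_left hJ1 hpa0
          _ = (kap * p / 4) * (a * ‖x‖ ^ 3) := by rw [hRdef]; ring
          _ ≤ (kap * p / 4) * 1 := by
              apply mul_le_mul_of_nonneg_left hx3
              have := kap_nonneg
              positivity
          _ ≤ 3 * kap * p := by nlinarith [kap_nonneg]
      · have hM2 : M ≤ 2 * (‖x‖ ^ 2 / s) := by
          have h1 : 1 ≤ ‖x‖ ^ 2 / s := (one_le_div hs0).2 hcase.le
          simp only [hMdef]; linarith
        calc ((p * a) * J) * M ≤ ((p * a) * J) * (2 * (‖x‖ ^ 2 / s)) := by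
              apply mul_le_mul_of_nonneg_left hM2 (mul_nonneg hpa0 hJ0)
          _ ≤ ((p * a) * (3 * kap * (s * R))) * (2 * (‖x‖ ^ 2 / s)) := by
              apply mul_le_mul_of_nonneg_right _ (by positivity)
              exact mul_le_mul_of_nonneg_left hJ2 hpa0
          _ = (3 * kap * p) * (a * ‖x‖ ^ 3) := by
              rw [hRdef]; field_simp
          _ ≤ (3 * kap * p) * 1 := by
              apply mul_le_mul_of_nonneg_left hx3
              have := kap_nonneg
              positivity
          _ = 3 * kap * p := mul_one _
    calc ∫ y in ball x R, f y
        ≤ ∫ y in ball x R, (p * a) * (1 + ‖x - y‖ ^ 2 / s)⁻¹ :=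
          setIntegral_mono_on hf_int.integrableOn (hJint.const_mul _)
            measurableSet_ball hptII
      _ = (p * a) * ∫ y in ball x R, (1 + ‖x - y‖ ^ 2 / s)⁻¹ := integral_const_mul _ _
      _ = (p * a) * J := by
          rw [hJdef, ← reflect x R (fun z : E3 => (1 + ‖z‖ ^ 2 / s)⁻¹)]
      _ = (((p * a) * J) * M) * M⁻¹ := by
          rw [mul_assoc ((p * a) * J) M M⁻¹, mul_inv_cancel₀ (ne_of_gt hM0), mul_one]
      _ ≤ (3 * kap * p) * M⁻¹ :=
          mul_le_mul_of_nonneg_right hkey (inv_nonneg.2 hM0.le)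
  calc ∫ y, f y = (∫ y in ball x R, f y) + ∫ y in (ball x R)ᶜ, f y := hsplit
    _ ≤ (3 * kap * p) * M⁻¹ + 4 * M⁻¹ * K := add_le_add hregionII hregionI
    _ = (3 * kap * p + 4 * K) * M⁻¹ := by ring
    _ ≤ (4*K + 3*kap*p + 1) * M⁻¹ := by
        apply mul_le_mul_of_nonneg_right (by linarith) (inv_nonneg.2 hM0.le)
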